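/- Let ℒ = {l₁, l₂, …, l_s} be a set of s integers with 0 < l₁ < l₂ < … < l_s. Suppose A₁, A₂, …, A_m and B₁, B₂, …, B_m are subsets of [n] such that: (i) |Aᵢ ∩ Bⱼ| ∈ ℒ for every pair i < j; (ii) Bᵢ ⊆ Aᵢ for all i ≤ m and |Aᵢ ∩ Bᵢ| ∉ ℒ for every k + 2 ≤ i ≤ m, where k is the maximum size of a member of {B₁, …, B_m}; (iii) ∩_{1 ≤ j ≤ k+1} Bⱼ = ∩_{1 ≤ j ≤ m} Bⱼ, |∩_{1 ≤ j ≤ m} Bⱼ| < l₁, and Aᵢ = Bᵢ for every i ≤ k + 1. If n ≥ (C(k² + k, l₁+1) + 1)·s + l₁, then m ≤ C(n−l₁, s) + C(n−l₁, s−1) + … + C(n−l₁, 0). -/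

import Mathlib

open Finset

namespace Stmt5Aux

/-- indicator that `D ⊆ C`, as a `ℚ`-valued function -/
def eD (n : ℕ) (D : Finset (Fin n)) : Finset (Fin n) → ℚ :=
  fun C => if D ⊆ C then 1 else 0

/-- generators: indicators of subsets of `R` of size at most `d` -/
def gens (n : ℕ) (R : Finset (Fin n)) (d : ℕ) : Set (Finset (Fin n) → ℚ) :=
  {g | ∃ D : Finset (Fin n), D ⊆ R ∧ D.card ≤ d ∧ g = eD n D}

theorem mul_step {n : ℕ} (R : Finset (Fin n)) (κ : ℚ) (d : ℕ) {f : Finset (Fin n) → ℚ}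
    (hf : f ∈ Submodule.span ℚ (gens n R d)) :
    (fun C => (((R ∩ C).card : ℚ) + κ) * f C) ∈ Submodule.span ℚ (gens n R (d + 1)) := by
  induction hf using Submodule.span_induction with
  | mem g hg =>
    obtain ⟨D, hDR, hDc, rfl⟩ := hg
    have hfun : (fun C => (((R ∩ C).card : ℚ) + κ) * eD n D C)
        = (∑ u ∈ R, eD n (insert u D)) + κ • eD n D := by
      funext C
      by_cases h : D ⊆ C
      · have h1 : ∀ u, (insert u D ⊆ C) ↔ (u ∈ C) := by
          intro u; rw [Finset.insert_subset_iff]; simp [h]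
        simp only [eD, h, if_true, Finset.sum_apply, Pi.add_apply, Pi.smul_apply]
        rw [Finset.sum_congr rfl (fun u _ => by rw [show (if insert u D ⊆ C then (1:ℚ) else 0) = if u ∈ C then 1 else 0 from by simp [h1 u]])]
        rw [Finset.sum_boole]
        rw [Finset.filter_mem_eq_inter]
        simp [mul_one]
      · have h1 : ∀ u, ¬ (insert u D ⊆ C) := by
          intro u hu; exact h (Finset.Subset.trans (Finset.subset_insert u D) hu)
        simp [eD, h, h1, Finset.sum_apply]
    rw [hfun]
    exact Submodule.add_mem _
      (Submodule.sum_mem _ (fun u _hu => Submodule.subset_span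
        ⟨insert u D, Finset.insert_subset_iff.2 ⟨_hu, hDR⟩,
        (Finset.card_insert_le _ _).trans (by omega), rfl⟩))
      (Submodule.smul_mem _ κ (Submodule.subset_span ⟨D, hDR, hDc.trans (Nat.le_succ d), rfl⟩))
  | zero =>
    have h0 : (fun C => (((R ∩ C).card : ℚ) + κ) * (0 : Finset (Fin n) → ℚ) C) = 0 := by
      funext C; simp
    rw [h0]; exact Submodule.zero_mem _
  | add x y hx hy ihx ihy =>
    have : (fun C => (((R ∩ C).card : ℚ) + κ) * (x + y) C)
        = (fun C => (((R ∩ C).card : ℚ) + κ) * x C) + (fun C => (((R ∩ C).card : ℚ) + κ) * y C) := by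
      funext C; simp [mul_add]
    rw [this]; exact Submodule.add_mem _ ihx ihy
  | smul a x hx ih =>
    have : (fun C => (((R ∩ C).card : ℚ) + κ) * (a • x) C)
        = a • (fun C => (((R ∩ C).card : ℚ) + κ) * x C) := by
      funext C; simp [Pi.smul_apply]; ring
    rw [this]; exact Submodule.smul_mem _ _ ih

theorem prod_mem_span {n : ℕ} (R : Finset (Fin n)) {β : Type} [DecidableEq β]
    (T : Finset β) (c : β → ℚ) :
    (fun C => ∏ t ∈ T, (((R ∩ C).card : ℚ) + c t)) ∈ Submodule.span ℚ (gens n R T.card) := by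
  induction T using Finset.induction_on with
  | empty =>
    have : (fun (C : Finset (Fin n)) => ∏ t ∈ (∅ : Finset β), (((R ∩ C).card : ℚ) + c t)) = eD n ∅ := by
      funext C; simp [eD]
    rw [this]
    exact Submodule.subset_span ⟨∅, Finset.empty_subset _, by simp, rfl⟩
  | insert a T' ha ih =>
    have : (fun C => ∏ t ∈ insert a T', (((R ∩ C).card : ℚ) + c t))
        = fun C => (((R ∩ C).card : ℚ) + c a) * ∏ t ∈ T', (((R ∩ C).card : ℚ) + c t) := by
      funext C; rw [Finset.prod_insert ha]
    rw [this, Finset.card_insert_of_notMem ha]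
    exact mul_step R (c a) T'.card ih





theorem indep_of_triangular {Ω : Type} {m : ℕ} (I : Finset (Fin m))
    (f : Fin m → Ω → ℚ) (x : Fin m → Ω)
    (h0 : ∀ p ∈ I, ∀ q ∈ I, q < p → f p (x q) = 0)
    (hd : ∀ p ∈ I, f p (x p) ≠ 0) :
    LinearIndependent ℚ (fun p : {p // p ∈ I} => f p) := by
  classical
  rw [linearIndependent_iff']
  intro t g hsum
  by_contra hne
  push_neg at hne
  obtain ⟨i₀, hi₀t, hi₀⟩ := hne
  set T : Finset {p // p ∈ I} := t.filter (fun i => g i ≠ 0) with hT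
  have hTne : T.Nonempty := ⟨i₀, by simp [hT, hi₀t, hi₀]⟩
  set q := T.min' hTne with hqdef
  have hqT : q ∈ T := T.min'_mem hTne
  have hqt : q ∈ t := (mem_filter.1 hqT).1
  have hgq : g q ≠ 0 := (mem_filter.1 hqT).2
  have heval := congrFun hsum (x q)
  rw [Finset.sum_apply] at heval
  have hsingle : ∑ i ∈ t, (g i • f (i : Fin m)) (x q) = g q * f (q : Fin m) (x (q : Fin m)) := by
    rw [Finset.sum_eq_single q]
    · simp
    · intro i hit hiq
      by_cases hgi : g i = 0
      · simp [hgi]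
      · have hiT : i ∈ T := mem_filter.2 ⟨hit, hgi⟩
        have hle : q ≤ i := T.min'_le i hiT
        have hlt0 : q < i := lt_of_le_of_ne hle (Ne.symm hiq)
        have hlt : (q : Fin m) < (i : Fin m) := Subtype.coe_lt_coe.mpr hlt0
        have := h0 i i.2 q q.2 hlt
        simp [this]
    · intro h; exact absurd hqt h
  rw [hsingle] at heval
  exact hgq (by
    have := mul_eq_zero.1 heval
    rcases this with h | h
    · exact h
    · exact absurd h (hd q q.2))

theorem card_le_of_indep_span {m : ℕ} {V : Type} [AddCommGroup V] [Module ℚ V]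
    (I : Finset (Fin m)) (f : Fin m → V) (E : Finset V)
    (hmem : ∀ p ∈ I, f p ∈ Submodule.span ℚ (E : Set V))
    (hind : LinearIndependent ℚ (fun p : {p // p ∈ I} => f p)) :
    I.card ≤ E.card := by
  classical
  set W := Submodule.span ℚ (E : Set V) with hW
  haveI : FiniteDimensional ℚ W := FiniteDimensional.span_finset ℚ E
  set g : {p // p ∈ I} → W := fun p => ⟨f p, hmem p p.2⟩ with hg
  have hgi : LinearIndependent ℚ g := by
    apply LinearIndependent.of_comp W.subtype
    exact hind
  have h1 : Fintype.card {p // p ∈ I} ≤ Module.finrank ℚ W := hgi.fintype_card_le_finrank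
  have h2 : Module.finrank ℚ W ≤ E.card := by
    have := finrank_span_finset_le_card (R := ℚ) E
    simpa [Set.finrank, hW] using this
  have h3 : Fintype.card {p // p ∈ I} = I.card := Fintype.card_coe I
  omega





theorem class_card_bound {n m s k : ℕ} (hs : 0 < s) (l : Fin s → ℕ) (hl : StrictMono l)
    (A B : Fin m → Finset (Fin n))
    (hi : ∀ i j : Fin m, i < j → ∃ t, (A i ∩ B j).card = l t)
    (hii₁ : ∀ i, B i ⊆ A i)
    (hii₂ : ∀ i : Fin m, k + 1 ≤ (i : ℕ) → ∀ t, (A i ∩ B i).card ≠ l t)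
    (S : Finset (Fin n)) (hS : S.card = l ⟨0, hs⟩ + 1)
    (T : Finset (Fin m)) (hT : ∀ p ∈ T, (k + 1 ≤ (p : ℕ)) ∧ S ⊆ B p) :
    T.card ≤ ∑ j ∈ range s, (n - l ⟨0, hs⟩ - 1).choose j := by
  classical
  set z : Fin s := ⟨0, hs⟩ with hz
  set l0 := l z with hl0
  -- the functions
  set G : Fin m → Finset (Fin n) → ℚ := fun p C =>
    ∏ t ∈ univ.erase z, ((((B p \ S) ∩ C).card : ℚ) + ((l0 : ℚ) + 1 - (l t : ℚ))) with hG
  -- evaluation identity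
  have heval : ∀ p ∈ T, ∀ q ∈ T,
      G p (A q) = ∏ t ∈ univ.erase z, (((B p ∩ A q).card : ℚ) - (l t : ℚ)) := by
    intro p hp q hq
    have hSB : S ⊆ B p := (hT p hp).2
    have hSA : S ⊆ A q := ((hT q hq).2).trans (hii₁ q)
    have hkey : ((B p \ S) ∩ A q).card + (l0 + 1) = (B p ∩ A q).card := by
      have hun : B p ∩ A q = ((B p \ S) ∩ A q) ∪ S := by
        ext u
        simp only [mem_inter, mem_union, mem_sdiff]
        constructor
        · rintro ⟨h1, h2⟩
          by_cases hu : u ∈ S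
          · exact Or.inr hu
          · exact Or.inl ⟨⟨h1, hu⟩, h2⟩
        · rintro (⟨⟨h1, _⟩, h2⟩ | hu)
          · exact ⟨h1, h2⟩
          · exact ⟨hSB hu, hSA hu⟩
      have hdisj : Disjoint ((B p \ S) ∩ A q) S :=
        Finset.sdiff_disjoint.mono_left inter_subset_left
      rw [hun, card_union_of_disjoint hdisj, hS]
    apply Finset.prod_congr rfl
    intro t _
    have hkeyQ : (((B p \ S) ∩ A q).card : ℚ) + ((l0 : ℚ) + 1) = ((B p ∩ A q).card : ℚ) := by
      exact_mod_cast congrArg (Nat.cast : ℕ → ℚ) hkey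
    linarith [hkeyQ]
  -- triangularity
  have h0 : ∀ p ∈ T, ∀ q ∈ T, q < p → G p (A q) = 0 := by
    intro p hp q hq hlt
    obtain ⟨t', ht'⟩ := hi q p hlt
    have hSsub : S ⊆ A q ∩ B p :=
      subset_inter (((hT q hq).2).trans (hii₁ q)) (hT p hp).2
    have hge : l0 + 1 ≤ l t' := by
      have := card_le_card hSsub
      rw [hS, ht'] at this
      exact this
    have htne : t' ≠ z := by
      intro h
      rw [h, ← hl0] at hge
      omega
    rw [heval p hp q hq]
    apply Finset.prod_eq_zero (Finset.mem_erase.2 ⟨htne, mem_univ _⟩)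
    have hcomm : B p ∩ A q = A q ∩ B p := inter_comm _ _
    rw [hcomm, ht']
    simp
  -- nonzero diagonal
  have hdiag : ∀ p ∈ T, G p (A p) ≠ 0 := by
    intro p hp
    rw [heval p hp p hp]
    rw [Finset.prod_ne_zero_iff]
    intro t _
    have hBAp : B p ∩ A p = B p := inter_eq_left.2 (hii₁ p)
    have hABp : A p ∩ B p = B p := inter_eq_right.2 (hii₁ p)
    have hne := hii₂ p (hT p hp).1 t
    rw [hABp] at hne
    rw [hBAp]
    intro h
    exact hne (by exact_mod_cast sub_eq_zero.1 h)
  -- span membership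
  set DD : Finset (Finset (Fin n)) :=
    (range s).biUnion (fun j => Finset.powersetCard j (univ \ S)) with hDD
  set E : Finset (Finset (Fin n) → ℚ) := DD.image (eD n) with hE
  have hmem : ∀ p ∈ T, G p ∈ Submodule.span ℚ (E : Set (Finset (Fin n) → ℚ)) := by
    intro p hp
    have h1 := prod_mem_span (B p \ S) (univ.erase z) (fun t => (l0 : ℚ) + 1 - (l t : ℚ))
    have hsub : gens n (B p \ S) ((univ.erase z).card) ⊆ (E : Set (Finset (Fin n) → ℚ)) := by
      rintro g ⟨D, hDQ, hDc, rfl⟩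
      have hcard : (univ.erase z).card = s - 1 := by
        rw [Finset.card_erase_of_mem (mem_univ z), Finset.card_univ, Fintype.card_fin]
      refine Finset.mem_coe.2 (Finset.mem_image.2 ⟨D, ?_, rfl⟩)
      rw [hDD]
      rw [Finset.mem_biUnion]
      refine ⟨D.card, Finset.mem_range.2 ?_, Finset.mem_powersetCard.2 ⟨?_, rfl⟩⟩
      · rw [hcard] at hDc; omega
      · exact hDQ.trans (Finset.sdiff_subset_sdiff (Finset.subset_univ _) (le_refl _))
    exact Submodule.span_mono hsub h1
  -- independence
  have hind := indep_of_triangular T G (fun p => A p) h0 hdiag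
  have hcard := card_le_of_indep_span T G E hmem hind
  -- counting
  have hEcard : E.card ≤ DD.card := Finset.card_image_le
  have hDDcard : DD.card = ∑ j ∈ range s, (n - l0 - 1).choose j := by
    rw [hDD, Finset.card_biUnion]
    · apply Finset.sum_congr rfl
      intro j _
      rw [Finset.card_powersetCard]
      congr 1
      rw [Finset.card_sdiff_of_subset (Finset.subset_univ S), Finset.card_univ, Fintype.card_fin, hS]
      omega
    · intro x _ y _ hxy
      simp only [Finset.disjoint_left]
      intro a ha hay
      rw [Finset.mem_powersetCard] at ha hay
      exact hxy (ha.2 ▸ hay.2 ▸ rfl)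
  omega

end Stmt5Aux

namespace Stmt5Aux

theorem choose_step {v s N : ℕ} (hv : N * s + s ≤ v + 1) {j : ℕ} (hj : j + 1 < s) :
    N * v.choose j ≤ v.choose (j + 1) := by
  have key := Nat.choose_succ_right_eq v j
  have h2 : N * (j + 1) ≤ N * s := Nat.mul_le_mul_left N (by omega)
  have h1 : N * (j + 1) ≤ v - j := by
    have h3 : N * (j+1) + s ≤ v + 1 := le_trans (by linarith) hv
    omega
  have h4 : N * v.choose j * (j + 1) ≤ v.choose (j + 1) * (j + 1) := by
    calc N * v.choose j * (j + 1) = v.choose j * (N * (j + 1)) := by ring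
      _ ≤ v.choose j * (v - j) := Nat.mul_le_mul_left _ h1
      _ = v.choose (j + 1) * (j + 1) := key.symm
  exact Nat.le_of_mul_le_mul_right h4 (by omega)

theorem choose_ratio {v s N : ℕ} (hs : 0 < s) (hv : N * s + s ≤ v + 1) :
    N * v.choose (s - 1) ≤ v.choose s := by
  have key := Nat.choose_succ_right_eq v (s - 1)
  rw [show s - 1 + 1 = s from by omega] at key
  have h1 : N * s ≤ v - (s - 1) := by omega
  have h4 : N * v.choose (s - 1) * s ≤ v.choose s * s := by
    calc N * v.choose (s - 1) * s = v.choose (s - 1) * (N * s) := by ring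
      _ ≤ v.choose (s - 1) * (v - (s - 1)) := Nat.mul_le_mul_left _ h1
      _ = v.choose s * s := key.symm
  exact Nat.le_of_mul_le_mul_right h4 hs

theorem geom_bound {v s N : ℕ} (hs : 0 < s) (hN : 1 ≤ N) (hv : N * s + s ≤ v + 1) :
    (N - 1) * (∑ j ∈ range s, v.choose j) ≤ N * v.choose (s - 1) := by
  have main : ∀ r, r < s → (N - 1) * ∑ j ∈ range (r + 1), v.choose j ≤ N * v.choose r := by
    intro r
    induction r with
    | zero => intro _; simp only [zero_add, Finset.sum_range_one, Nat.choose_zero_right, Nat.mul_one]; omega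
    | succ r ih =>
      intro hr
      rw [Finset.sum_range_succ, Nat.mul_add]
      have h1 := ih (by omega)
      have h2 := choose_step hv hr
      calc (N - 1) * (∑ j ∈ range (r + 1), v.choose j) + (N - 1) * v.choose (r + 1)
          ≤ N * v.choose r + (N - 1) * v.choose (r + 1) := Nat.add_le_add_right h1 _
        _ ≤ v.choose (r + 1) + (N - 1) * v.choose (r + 1) := Nat.add_le_add_right h2 _
        _ = (N - 1 + 1) * v.choose (r + 1) := by ring
        _ = N * v.choose (r + 1) := by rw [Nat.sub_add_cancel hN]
  have h := main (s - 1) (by omega)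
  rwa [show s - 1 + 1 = s from by omega] at h

theorem pascal_grow (u b : ℕ) (hb : b ≤ u) :
    ∀ t, u.choose (b + 1) + t ≤ (u + t).choose (b + 1) := by
  intro t
  induction t with
  | zero => simp
  | succ t ih =>
    have h1 : (u + (t + 1)).choose (b + 1) = (u + t).choose b + (u + t).choose (b + 1) := by
      rw [show u + (t + 1) = (u + t) + 1 from by ring, Nat.choose_succ_succ]
    have h2 : 1 ≤ (u + t).choose b := Nat.choose_pos (by omega)
    omega

theorem succ_le_choose (a b : ℕ) (hb : 1 ≤ b) : a + 1 ≤ (a + b).choose b := by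
  obtain ⟨b', rfl⟩ : ∃ b', b = b' + 1 := ⟨b - 1, by omega⟩
  induction a with
  | zero => simp
  | succ a iha =>
    have h1 : (a + 1 + (b' + 1)).choose (b' + 1)
        = (a + (b' + 1)).choose b' + (a + (b' + 1)).choose (b' + 1) := by
      rw [show a + 1 + (b' + 1) = (a + (b' + 1)) + 1 from by ring, Nat.choose_succ_succ]
    have h2 : 1 ≤ (a + (b' + 1)).choose b' := Nat.choose_pos (by omega)
    have h3 := iha
    omega

theorem final_arith {kk N N' X c Cvs : ℕ} (hc : 1 ≤ c) (hcX : c ≤ X)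
    (hNN' : N' + kk ≤ N) (hN'1 : 1 ≤ N') (hkk : 1 ≤ kk)
    (hCvs : N * c ≤ Cvs) (hgeom : (N - 1) * X ≤ N * c) :
    (kk + 1) + N' * X ≤ 2 * X + Cvs := by
  obtain ⟨k', rfl⟩ : ∃ k', kk = k' + 1 := ⟨kk - 1, by omega⟩
  obtain ⟨N₂, rfl⟩ : ∃ N₂, N = N₂ + 2 := ⟨N - 2, by omega⟩
  rw [show N₂ + 2 - 1 = N₂ + 1 from by omega] at hgeom
  have H1 : N' * ((N₂ + 1) * X) ≤ N' * ((N₂ + 2) * c) := Nat.mul_le_mul_left _ hgeom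
  have H2 : (N₂ + 1) * ((N₂ + 2) * c) ≤ (N₂ + 1) * Cvs := Nat.mul_le_mul_left _ hCvs
  have H3 : (N' + k') * ((N₂ + 2) * c) ≤ (N₂ + 1) * ((N₂ + 2) * c) :=
    Nat.mul_le_mul_right _ (by omega)
  have H4 : (N₂ + 1) * (k' + 2) ≤ (N₂ + 1) * (k' + 2) * c := Nat.le_mul_of_pos_right _ hc
  have H5 : (N₂ + 1) * c ≤ (N₂ + 1) * X := Nat.mul_le_mul_left _ hcX
  have key : (N₂ + 1) * ((k' + 1 + 1) + N' * X) ≤ (N₂ + 1) * (2 * X + Cvs) := by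
    nlinarith [H1, H2, H3, H4, H5, Nat.zero_le (c * k')]
  exact Nat.le_of_mul_le_mul_left key (by omega)

end Stmt5Aux

open Finset

/-- **Proposition 3.3.** (Indices `0, …, m-1` here correspond to `1, …, m` in the paper.)
Let `ℒ = {l 0 < ⋯ < l (s-1)}` be a set of `s` positive integers, and let
`A 0, …, A (m-1)` and `B 0, …, B (m-1)` be subsets of `[n]` such that:
(i) `|A i ∩ B j| ∈ ℒ` for `i < j`;
(ii) `B i ⊆ A i` for all `i`, and `|A i ∩ B i| ∉ ℒ` whenever `i ≥ k + 1`
(paper: `k + 2 ≤ i ≤ m` in `1`-based indexing), where `k` is the maximum size of a `B i`;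
(iii) `⋂_{i < k+1} B i = ⋂_{i < m} B i`, `|⋂_{i < m} B i| < l₁`, and `A i = B i` for
all `i < k + 1` (paper: `i ≤ k + 1` in `1`-based indexing).
If `n ≥ (C(k²+k, l₁+1) + 1)·s + l₁`, then
`m ≤ C(n-l₁, s) + C(n-l₁, s-1) + ⋯ + C(n-l₁, 0)`. -/
theorem stmt_5 (s n m k : ℕ) (hs : 0 < s)
    (l : Fin s → ℕ) (hl : StrictMono l) (hlpos : 0 < l ⟨0, hs⟩)
    (hm : k + 1 ≤ m)
    (A B : Fin m → Finset (Fin n))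
    (hk₁ : ∀ i, (B i).card ≤ k) (hk₂ : ∃ i, (B i).card = k)
    (hi : ∀ i j : Fin m, i < j → ∃ t, (A i ∩ B j).card = l t)
    (hii₁ : ∀ i, B i ⊆ A i)
    (hii₂ : ∀ i : Fin m, k + 1 ≤ (i : ℕ) → ∀ t, (A i ∩ B i).card ≠ l t)
    (hiii₁ : (Finset.univ.filter fun j : Fin m => (j : ℕ) < k + 1).inf B =
      Finset.univ.inf B)
    (hiii₂ : (Finset.univ.inf B).card < l ⟨0, hs⟩)
    (hiii₃ : ∀ i : Fin m, (i : ℕ) < k + 1 → A i = B i)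
    (hbig : n ≥ ((k ^ 2 + k).choose (l ⟨0, hs⟩ + 1) + 1) * s + l ⟨0, hs⟩) :
    m ≤ ∑ j ∈ Finset.range (s + 1), (n - l ⟨0, hs⟩).choose j := by
  classical
  set l0 := l ⟨0, hs⟩ with hl0def
  set N := (k ^ 2 + k).choose (l0 + 1) with hNdef
  -- basic size facts
  have hbig' : N * s + s + l0 ≤ n := by
    have h2 : (N + 1) * s = N * s + s := by ring
    linarith [hbig]
  have hn1 : l0 + 1 ≤ n := by linarith [Nat.zero_le (N * s), hs]
  set v := n - l0 - 1 with hvdef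
  have hveq : n - l0 = v + 1 := by omega
  have hn_eq : n = v + 1 + l0 := by omega
  have hvN : N * s + s ≤ v + 1 := by linarith [hbig', hn_eq]
  have hvs : s ≤ v + 1 := by linarith [Nat.zero_le (N * s)]
  set X := ∑ j ∈ range s, v.choose j with hXdef
  have hXpos : 1 ≤ X := by
    have h := Finset.single_le_sum (f := fun j => v.choose j)
      (fun i _ => Nat.zero_le _) (Finset.mem_range.2 hs)
    simpa using h
  have hcX : v.choose (s - 1) ≤ X :=
    Finset.single_le_sum (f := fun j => v.choose j)
      (fun i _ => Nat.zero_le _) (Finset.mem_range.2 (by omega))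
  have hc1 : 1 ≤ v.choose (s - 1) := Nat.choose_pos (by omega)
  -- rewrite the RHS
  have hRHS : ∑ j ∈ range (s + 1), (n - l0).choose j = 2 * X + v.choose s := by
    rw [hveq, Finset.sum_range_succ']
    have e2 : ∑ j ∈ range s, (v + 1).choose (j + 1)
        = ∑ j ∈ range s, (v.choose j + v.choose (j + 1)) :=
      Finset.sum_congr rfl (fun j _ => Nat.choose_succ_succ v j)
    rw [e2, Finset.sum_add_distrib]
    have e3 : (∑ j ∈ range s, v.choose (j + 1)) + v.choose 0 = X + v.choose s := by
      rw [← Finset.sum_range_succ' (fun j => v.choose j) s, Finset.sum_range_succ]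
    simp only [Nat.choose_zero_right] at e3 ⊢
    omega
  rw [hRHS]
  -- Early and Late indices
  set Early := Finset.univ.filter (fun j : Fin m => (j : ℕ) < k + 1) with hEarlydef
  set Late := Finset.univ.filter (fun j : Fin m => ¬ ((j : ℕ) < k + 1)) with hLatedef
  have hsplit : Early.card + Late.card = m := by
    rw [hEarlydef, hLatedef, Finset.card_filter_add_card_filter_not]
    simp
  have hEarlycard : Early.card = k + 1 := by
    have h : Early.card = (range (k + 1)).card := by
      apply Finset.card_bij (fun (a : Fin m) _ => (a : ℕ))
      · intro a ha; exact Finset.mem_range.2 (Finset.mem_filter.1 ha).2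
      · intro a _ b _ h; exact Fin.val_injective h
      · intro b hb
        rw [Finset.mem_range] at hb
        exact ⟨⟨b, lt_of_lt_of_le hb hm⟩, Finset.mem_filter.2 ⟨mem_univ _, hb⟩, rfl⟩
    rw [h, Finset.card_range]
  have h0m : 0 < m := by omega
  set i0 : Fin m := ⟨0, h0m⟩ with hi0def
  have hi0E : i0 ∈ Early := Finset.mem_filter.2 ⟨mem_univ _, by simp [hi0def]⟩
  have hA0 : A i0 = B i0 := hiii₃ i0 (by simp [hi0def])
  have hmono0 : ∀ t : Fin s, l0 ≤ l t := by
    intro t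
    exact hl.monotone (by simp [Fin.le_def])
  by_cases hk0 : k = 0
  · -- k = 0 : no late indices at all
    have hLateempty : Late = ∅ := by
      rw [Finset.eq_empty_iff_forall_notMem]
      intro i hiL
      have hival : k + 1 ≤ (i : ℕ) := by
        have := (Finset.mem_filter.1 hiL).2; omega
      have hlt : i0 < i := by rw [Fin.lt_def]; simp [hi0def]; omega
      obtain ⟨t, ht⟩ := hi i0 i hlt
      have h1 : (A i0 ∩ B i).card ≤ (B i).card := card_le_card inter_subset_right
      have h2 := hk₁ i
      have h3 := hmono0 t
      omega
    rw [hLateempty] at hsplit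
    simp at hsplit
    omega
  have hk1 : 1 ≤ k := by omega
  have h1m : 1 < m := by omega
  set i1 : Fin m := ⟨1, h1m⟩ with hi1def
  have hl0k : l0 ≤ k := by
    obtain ⟨t, ht⟩ := hi i0 i1 (by rw [Fin.lt_def]; simp [hi0def, hi1def])
    have h3 : (A i0 ∩ B i1).card ≤ (B i1).card := card_le_card inter_subset_right
    have h4 := hk₁ i1
    have h5 := hmono0 t
    omega
  obtain ⟨d, hd⟩ : ∃ d, k = l0 + d := ⟨k - l0, by omega⟩
  -- the union of the early B's
  set U := Early.biUnion B with hUdef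
  have hBsubU : ∀ j ∈ Early, B j ⊆ U := fun j hj => Finset.subset_biUnion_of_mem B hj
  have hUcard : U.card ≤ k + k * d := by
    have hsub : U ⊆ B i0 ∪ (Early.erase i0).biUnion (fun j => B j \ B i0) := by
      intro u hu
      rw [hUdef, Finset.mem_biUnion] at hu
      obtain ⟨j, hj, hu⟩ := hu
      by_cases h : u ∈ B i0
      · exact Finset.mem_union_left _ h
      · refine Finset.mem_union_right _
          (Finset.mem_biUnion.2 ⟨j, ?_, Finset.mem_sdiff.2 ⟨hu, h⟩⟩)
        refine Finset.mem_erase.2 ⟨?_, hj⟩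
        rintro rfl; exact h hu
    have hstep : ∀ j ∈ Early.erase i0, (B j \ B i0).card ≤ d := by
      intro j hj
      have hjE := Finset.mem_erase.1 hj
      have hjlt : i0 < j := by
        rw [Fin.lt_def]
        have hne : (j : ℕ) ≠ 0 := by
          intro h
          exact hjE.1 (Fin.ext (by simp [hi0def, h]))
        simp [hi0def]; omega
      obtain ⟨t, ht⟩ := hi i0 j hjlt
      rw [hA0] at ht
      have h3 : l0 ≤ (B i0 ∩ B j).card := by
        have := hmono0 t; omega
      have h4 : (B j \ B i0).card + (B j ∩ B i0).card = (B j).card :=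
        Finset.card_sdiff_add_card_inter _ _
      have h5 : (B j ∩ B i0).card = (B i0 ∩ B j).card := by rw [Finset.inter_comm]
      have h6 := hk₁ j
      omega
    have h7 : U.card ≤ (B i0).card + ∑ j ∈ Early.erase i0, (B j \ B i0).card := by
      calc U.card ≤ (B i0 ∪ (Early.erase i0).biUnion (fun j => B j \ B i0)).card :=
            card_le_card hsub
        _ ≤ (B i0).card + ((Early.erase i0).biUnion (fun j => B j \ B i0)).card :=
            Finset.card_union_le _ _
        _ ≤ (B i0).card + ∑ j ∈ Early.erase i0, (B j \ B i0).card :=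
            Nat.add_le_add_left Finset.card_biUnion_le _
    have h8 : ∑ j ∈ Early.erase i0, (B j \ B i0).card ≤ (Early.erase i0).card * d := by
      have := Finset.sum_le_card_nsmul (Early.erase i0) (fun j => (B j \ B i0).card) d
        (fun x hx => hstep x hx)
      simpa [smul_eq_mul] using this
    have h9 : (Early.erase i0).card = k := by
      rw [Finset.card_erase_of_mem hi0E, hEarlycard]; omega
    rw [h9] at h8
    have h10 := hk₁ i0
    omega
  -- every late B meets U in at least l0+1 points
  have fact2 : ∀ i ∈ Late, l0 + 1 ≤ (B i ∩ U).card := by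
    intro i hiL
    by_contra hcon
    push_neg at hcon
    have hik : k + 1 ≤ (i : ℕ) := by
      have := (Finset.mem_filter.1 hiL).2; omega
    have hkey : ∀ j ∈ Early, B j ∩ B i = B i ∩ U := by
      intro j hj
      have hjlt : j < i := by
        rw [Fin.lt_def]
        have := (Finset.mem_filter.1 hj).2; omega
      obtain ⟨t, ht⟩ := hi j i hjlt
      rw [hiii₃ j (Finset.mem_filter.1 hj).2] at ht
      have hsub : B j ∩ B i ⊆ B i ∩ U := by
        intro u hu
        rw [Finset.mem_inter] at hu ⊢
        exact ⟨hu.2, hBsubU j hj hu.1⟩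
      have h2 := hmono0 t
      exact Finset.eq_of_subset_of_card_le hsub (by omega)
    have hcore : B i ∩ U ⊆ Finset.univ.inf B := by
      rw [← hiii₁]
      have hle : ∀ j ∈ Early, B i ∩ U ≤ B j := by
        intro j hj
        have h4 : B i ∩ U ⊆ B j := by
          rw [← hkey j hj]; exact inter_subset_left
        exact Finset.le_iff_subset.2 h4
      exact Finset.le_inf hle
    have h5 : l0 ≤ (B i ∩ U).card := by
      have heq := hkey i0 hi0E
      obtain ⟨t, ht⟩ := hi i0 i (by rw [Fin.lt_def]; simp [hi0def]; omega)
      rw [hA0, heq] at ht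
      have := hmono0 t; omega
    have h6 := card_le_card hcore
    omega
  -- choose the (l0+1)-subsets
  have hchoice : ∀ i ∈ Late, ∃ Si : Finset (Fin n), Si ⊆ B i ∩ U ∧ Si.card = l0 + 1 := by
    intro i hiL
    obtain ⟨t, ht1, ht2⟩ := Finset.exists_subset_card_eq (fact2 i hiL)
    exact ⟨t, ht1, ht2⟩
  choose! σ hσ1 hσ2 using hchoice
  set SS := Finset.powersetCard (l0 + 1) U with hSSdef
  have hfib : Late.card = ∑ S ∈ SS, (Late.filter (fun i => σ i = S)).card := by
    apply Finset.card_eq_sum_card_fiberwise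
    intro i hiL
    exact Finset.mem_powersetCard.2 ⟨(hσ1 i hiL).trans inter_subset_right, hσ2 i hiL⟩
  have hfibbound : ∀ S ∈ SS, (Late.filter (fun i => σ i = S)).card ≤ X := by
    intro S hSmem
    have hScard : S.card = l0 + 1 := (Finset.mem_powersetCard.1 hSmem).2
    have hclass := Stmt5Aux.class_card_bound hs l hl A B hi hii₁ hii₂ S hScard
      (Late.filter (fun i => σ i = S)) ?_
    · calc (Late.filter (fun i => σ i = S)).card
          ≤ ∑ j ∈ range s, (n - l0 - 1).choose j := hclass
        _ = X := by rw [hXdef]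
    · intro p hp
      rw [Finset.mem_filter] at hp
      obtain ⟨hpL, hpS⟩ := hp
      constructor
      · have := (Finset.mem_filter.1 hpL).2; omega
      · rw [← hpS]; exact (hσ1 p hpL).trans inter_subset_left
  set N' := (k + k * d).choose (l0 + 1) with hN'def
  have hLatecard : Late.card ≤ N' * X := by
    calc Late.card = ∑ S ∈ SS, (Late.filter (fun i => σ i = S)).card := hfib
      _ ≤ ∑ _S ∈ SS, X := Finset.sum_le_sum hfibbound
      _ = SS.card * X := by rw [Finset.sum_const, smul_eq_mul]
      _ ≤ N' * X := by
          apply Nat.mul_le_mul_right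
          rw [hSSdef, Finset.card_powersetCard]
          exact Nat.choose_le_choose _ hUcard
  have hmB : m ≤ (k + 1) + N' * X := by
    rw [hEarlycard] at hsplit
    omega
  -- key numeric facts
  have hkk : k ≤ k * k := Nat.le_mul_of_pos_right k hk1
  have hk2 : k ≤ k ^ 2 := by
    calc k ≤ k * k := hkk
      _ = k ^ 2 := by ring
  have hmul2 : k ≤ k * l0 := Nat.le_mul_of_pos_right k hlpos
  have hsum : (k + k * d) + k * l0 = k ^ 2 + k := by
    calc (k + k * d) + k * l0 = k + k * (d + l0) := by ring
      _ = k + k * k := by rw [show d + l0 = k from by omega]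
      _ = k ^ 2 + k := by ring
  have hN'k : N' + k ≤ N := by
    have hb : l0 ≤ k + k * d := le_trans hl0k (Nat.le_add_right k (k * d))
    have hgrow := Stmt5Aux.pascal_grow (k + k * d) l0 hb (k * l0)
    rw [hsum] at hgrow
    calc N' + k ≤ N' + k * l0 := Nat.add_le_add_left hmul2 N'
      _ ≤ N := hgrow
  have hNk : k ≤ N := by
    obtain ⟨a, ha⟩ : ∃ a, k ^ 2 + k = a + (l0 + 1) :=
      ⟨k ^ 2 + k - (l0 + 1), by symm; apply Nat.sub_add_cancel; linarith⟩
    have h1 := Stmt5Aux.succ_le_choose a (l0 + 1) (by omega)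
    rw [← ha] at h1
    have h2 : k ≤ a + 1 := by linarith
    exact le_trans h2 h1
  have hCvs : N * v.choose (s - 1) ≤ v.choose s := Stmt5Aux.choose_ratio hs hvN
  have hN1 : 1 ≤ N := Nat.choose_pos (by linarith)
  have hgeom : (N - 1) * X ≤ N * v.choose (s - 1) := Stmt5Aux.geom_bound hs hN1 hvN
  by_cases hN'0 : N' = 0
  · rw [hN'0] at hmB
    have hNc : N ≤ N * v.choose (s - 1) := Nat.le_mul_of_pos_right N hc1
    linarith
  · have hN'1 : 1 ≤ N' := by omega
    have hfinal := Stmt5Aux.final_arith hc1 hcX hN'k hN'1 hk1 hCvs hgeom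
    linarith
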